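/- The forcing notion P defined in the paper is separative: for every condition p ∈ P there exist two incompatible extensions q, q' ≥ p. -/

import Mathlib

open FirstOrder

noncomputable section

/-- The language with a single binary relation symbol (membership). -/
inductive memRel : ℕ → Type
  | mem : memRel 2

/-- The language of set theory: one binary relation `∈`. -/
def memLang : Language := ⟨fun _ => Empty, memRel⟩

/-- `H κ` is the collection of sets of hereditary cardinality `< κ`. -/
def HSet (κ : Cardinal.{0}) : Set ZFSet.{0} :=
  {x | ZFSet.Hereditarily (fun y => Cardinal.mk y.toSet < Cardinal.lift.{1} κ) x}

/-- `H κ` as a structure in the language of set theory. -/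
noncomputable instance HSetStructure (κ : Cardinal.{0}) : memLang.Structure (HSet κ) where
  funMap {_n} f := Empty.elim f
  RelMap {_n} r := memRel.rec (motive := fun n _ => (Fin n → HSet κ) → Prop)
    (fun v => (v 0).1 ∈ (v 1).1) r

/-- `H_{ω₂}`. -/
abbrev Hω₂ : Set ZFSet.{0} := HSet (Cardinal.aleph 2)

/-- Countable elementary submodels of `H_{ω₂}` (before the `𝔐₀`-condition). -/
abbrev SqModel := memLang.ElementarySubstructure Hω₂

/-- The set of ordinals of a submodel, identified via von Neumann rank. -/
def ordTrace (M : Set Hω₂) : Set Ordinal.{0} :=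
  {o | ∃ x : Hω₂, x ∈ M ∧ x.1.IsOrdinal ∧ x.1.rank = o}

/-- `s` is a club (closed unbounded set) in the ordinal `a`. -/
def IsClubIn (s : Set Ordinal) (a : Ordinal) : Prop :=
  (∀ b ∈ s, b < a) ∧ (∀ b < a, ∃ c ∈ s, b < c) ∧
    (∀ b, b < a → 0 < b → b = sSup (s ∩ Set.Iio b) → b ∈ s)

/-- `b` is a limit point of the set of ordinals `s`. -/
def IsLimitPt (s : Set Ordinal) (b : Ordinal) : Prop :=
  0 < b ∧ b = sSup (s ∩ Set.Iio b)

/-- The order type of a set of ordinals. -/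
noncomputable def otp (s : Set Ordinal.{0}) : Ordinal.{1} :=
  Ordinal.type ((· < ·) : s → s → Prop)

/-- The ZFC set `x` codes the set of ordinals `s` (via von Neumann rank). -/
def CodesOrdSet (x : ZFSet) (s : Set Ordinal) : Prop :=
  (∀ y : ZFSet, y ∈ x → y.IsOrdinal) ∧
    ∀ o : Ordinal, o ∈ s ↔ ∃ y : ZFSet, y ∈ x ∧ y.rank = o

/-- The set of ordinals `s` is an element of the model `ℳ`. -/
def MemModelSet (ℳ : SqModel) (s : Set Ordinal) : Prop :=
  ∃ x : Hω₂, x ∈ ℳ ∧ CodesOrdSet x.1 s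

/-- The family `F` of sets of ordinals is an element of the model `ℳ`. -/
def MemModelFam (ℳ : SqModel) (F : Set (Set Ordinal)) : Prop :=
  ∃ x : Hω₂, x ∈ ℳ ∧ (∀ y : ZFSet, y ∈ x.1 → ∃ s, CodesOrdSet y s ∧ s ∈ F) ∧
    ∀ s ∈ F, ∃ y : ZFSet, y ∈ x.1 ∧ CodesOrdSet y s

/-- `ℳ ∈ 𝔐₀`: `ℳ` is countable and contains `ℰ_α` for each of its ordinals `α` of
cofinality `ω₁`. -/
def InM0 (E : Ordinal → Set (Set Ordinal)) (ℳ : SqModel) : Prop :=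
  (ℳ : Set Hω₂).Countable ∧
    ∀ α ∈ ordTrace (ℳ : Set Hω₂), α.cof = Cardinal.aleph 1 → MemModelFam ℳ (E α)

/-- The `T₁`-fence for `T₂` with common supremum `δ`. -/
noncomputable def fence (T₁ T₂ : Set Ordinal) (δ : Ordinal) : Set Ordinal :=
  {o | ∃ l ∈ T₂, δ < l ∧ l < sSup T₁ ∧ o = sInf (T₁ ∩ Set.Ici l)} ∪
    {sInf (T₁ ∩ Set.Ici δ)}

/-- Compatibility of two models (Definition 3.1 of the paper). -/
def ModCompat (ℳ₁ ℳ₂ : SqModel) : Prop :=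
  let T₁ := ordTrace (ℳ₁ : Set Hω₂)
  let T₂ := ordTrace (ℳ₂ : Set Hω₂)
  let δ := sSup (T₁ ∩ T₂)
  (δ ∈ T₁ → MemModelSet ℳ₁ (T₁ ∩ T₂)) ∧
  (δ ∉ T₁ → ∀ A : Hω₂, A ∈ ℳ₁ → Cardinal.mk A.1.toSet = Cardinal.aleph0 →
    (∀ y ∈ A.1, y.IsOrdinal ∧ y.rank < δ) → A ∈ ℳ₂) ∧
  (δ ∈ T₂ → MemModelSet ℳ₂ (T₁ ∩ T₂)) ∧
  (δ ∉ T₂ → ∀ A : Hω₂, A ∈ ℳ₂ → Cardinal.mk A.1.toSet = Cardinal.aleph0 →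
    (∀ y ∈ A.1, y.IsOrdinal ∧ y.rank < δ) → A ∈ ℳ₁) ∧
  (fence T₁ T₂ δ).Finite ∧ (fence T₂ T₁ δ).Finite

/-- Raw data of a condition of the forcing `P` (Definition 4.3): a finite partial
square-like sequence `F`, safeguards `S`, intervals `O` (coded by endpoint pairs
`(β', β]`), and side-condition models `Mods`. -/
structure SqCond where
  F : Ordinal → Option (Set Ordinal)
  S : Set Ordinal
  O : Set (Ordinal × Ordinal)
  Mods : Set SqModel

/-- The domain of the working part of a condition. -/
def SqCond.dom (p : SqCond) : Set Ordinal := {α | p.F α ≠ none}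

/-- Clauses (1)–(9) of Definition 4.3: `p` is a condition of the forcing `P`. -/
def SqValid (E : Ordinal → Set (Set Ordinal)) (p : SqCond) : Prop :=
  -- (1)
  p.dom.Finite ∧
  (∀ α s, p.F α = some s → (α ≠ 0 ∧ ∀ a < α, Order.succ a < α) ∧ α < (Cardinal.aleph 2).ord ∧
    IsClubIn s α ∧ otp s ≤ (Cardinal.aleph 1).ord ∧
    (α.cof = Cardinal.aleph 1 →
      ∃ C ∈ E α, ∃ β ∈ p.dom, β < α ∧ s = C ∩ Set.Ici β)) ∧
  -- (2)
  p.S ⊆ p.dom ∧ (∀ α ∈ p.dom, α.cof = Cardinal.aleph 1 → α ∈ p.S) ∧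
  -- (3)
  p.Mods.Finite ∧
  (∀ ℳ ∈ p.Mods, InM0 E ℳ ∧ sSup (ordTrace (ℳ : Set Hω₂)) ∈ p.S) ∧
  -- (4)
  (∀ α β s t, p.F α = some s → p.F β = some t → α ≠ β →
    ∀ μ, IsLimitPt s μ → IsLimitPt t μ → s ∩ Set.Iio μ = t ∩ Set.Iio μ) ∧
  -- (5)
  (∀ α s, p.F α = some s → ∀ σ ∈ p.S, σ < α → (s ∩ Set.Iio σ).Finite) ∧
  -- (6)
  (∀ α s, p.F α = some s → ∀ ℳ ∈ p.Mods,
    let T := ordTrace (ℳ : Set Hω₂)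
    -- (6a)
    (α ∈ T → MemModelSet ℳ s) ∧
    -- (6b)
    (((α ∉ T ∧ α < sSup T) ∨ (α ∈ T ∧ sSup (T ∩ Set.Iio α) < α)) →
      sInf (T ∩ Set.Ici α) ∈ p.S ∧ sSup (T ∩ Set.Iio α) ∈ p.dom) ∧
    -- (6c)
    ((α ∉ T ∧ sSup (T ∩ Set.Iio α) < α ∧ α < sSup T) →
      ((∃ β t, p.F β = some t ∧ α < β ∧ IsLimitPt t α ∧ s = t ∩ Set.Iio α) ∨
        ((∀ β t, p.F β = some t → α < β → ¬IsLimitPt t α) ∧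
          (s ∩ Set.Iio (sSup (T ∩ Set.Iio α))).Finite))) ∧
    -- (6d)
    ((α ∉ T ∧ sSup (T ∩ Set.Iio α) = α) →
      ((∃ β t, p.F β = some t ∧ α < β ∧ IsLimitPt t α ∧ s = t ∩ Set.Iio α) ∨
        ((∀ β t, p.F β = some t → α < β → ¬IsLimitPt t α) ∧
          otp s = Ordinal.omega0)))) ∧
  -- (7)
  p.O.Finite ∧
  (∀ i ∈ p.O, i.1 < i.2 ∧ i.2 < (Cardinal.aleph 2).ord ∧
    p.dom ∩ Set.Ioc i.1 i.2 = ∅) ∧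
  -- (8)
  (∀ i ∈ p.O, ∀ ℳ ∈ p.Mods,
    (i.1 ∈ ordTrace (ℳ : Set Hω₂) ∧ i.2 ∈ ordTrace (ℳ : Set Hω₂)) ∨
      ordTrace (ℳ : Set Hω₂) ∩ Set.Ioc i.1 i.2 = ∅) ∧
  -- (9)
  (∀ ℳ₁ ∈ p.Mods, ∀ ℳ₂ ∈ p.Mods, ModCompat ℳ₁ ℳ₂ ∧
    fence (ordTrace (ℳ₁ : Set Hω₂)) (ordTrace (ℳ₂ : Set Hω₂))
      (sSup (ordTrace (ℳ₁ : Set Hω₂) ∩ ordTrace (ℳ₂ : Set Hω₂))) ⊆ p.S ∧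
    fence (ordTrace (ℳ₂ : Set Hω₂)) (ordTrace (ℳ₁ : Set Hω₂))
      (sSup (ordTrace (ℳ₁ : Set Hω₂) ∩ ordTrace (ℳ₂ : Set Hω₂))) ⊆ p.S)

/-- The extension order on conditions: coordinatewise inclusion. -/
def SqLe (p q : SqCond) : Prop :=
  (∀ α s, p.F α = some s → q.F α = some s) ∧ p.S ⊆ q.S ∧ p.O ⊆ q.O ∧ p.Mods ⊆ q.Mods

/-- The fixed assignment `ℰ` of countable sets of clubs of order type `ω₁`. -/
def GoodE (E : Ordinal → Set (Set Ordinal)) : Prop :=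
  ∀ α, α < (Cardinal.aleph 2).ord → α.cof = Cardinal.aleph 1 →
    (E α).Countable ∧ (E α).Nonempty ∧
      ∀ C ∈ E α, IsClubIn C α ∧ otp C = (Cardinal.aleph 1).ord

lemma bddAbove_of_countable {s : Set Ordinal.{0}} (hs : s.Countable) : BddAbove s := by
  haveI := hs.to_subtype
  exact Ordinal.bddAbove_of_small

lemma ordTrace_countable {M : Set Hω₂} (hM : M.Countable) : (ordTrace M).Countable := by
  have hsub : ordTrace M ⊆ (fun x : Hω₂ => x.1.rank) '' M := by
    rintro o ⟨x, hx, -, hr⟩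
    exact ⟨x, hx, hr⟩
  exact (hM.image _).mono hsub

/-- The forcing notion `P` of Definition 4.3 is separative: every
condition has two incompatible extensions. -/
theorem sq_forcing_separative (E : Ordinal → Set (Set Ordinal)) (hE : GoodE E)
    (p : SqCond) (hp : SqValid E p) :
    ∃ q r : SqCond, SqValid E q ∧ SqValid E r ∧ SqLe p q ∧ SqLe p r ∧
      ¬∃ t : SqCond, SqValid E t ∧ SqLe q t ∧ SqLe r t := by
  obtain ⟨h1a, h1b, h2a, h2b, h3a, h3b, h4, h5, h6, h7a, h7b, h8, h9⟩ := hp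
  -- the bound `B` on everything mentioned in `p`
  set D : Set Ordinal := p.dom ∪ (Prod.snd '' p.O) with hD
  have hDfin : D.Finite := h1a.union (h7a.image _)
  have hDbdd : BddAbove D := hDfin.bddAbove
  set B : Ordinal := sSup D with hB
  have hdomB : ∀ x ∈ p.dom, x ≤ B := fun x hx => le_csSup hDbdd (Or.inl hx)
  have hOB : ∀ i ∈ p.O, i.2 ≤ B := fun i hi => le_csSup hDbdd (Or.inr ⟨i, hi, rfl⟩)
  have hBlt : B < (Cardinal.aleph 2).ord := by
    by_cases hne : D.Nonempty
    · have hBD : B ∈ D := hne.csSup_mem hDfin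
      rcases hBD with h | ⟨i, hi, hieq⟩
      · obtain ⟨s, hs⟩ := Option.ne_none_iff_exists'.mp h
        exact (h1b B s hs).2.1
      · rw [← hieq]; exact (h7b i hi).2.1
    · rw [Set.not_nonempty_iff_eq_empty] at hne
      rw [hB, hne, csSup_empty, Ordinal.bot_eq_zero, Cardinal.lt_ord, Ordinal.card_zero]
      exact Cardinal.aleph_pos 2
  set γ : Ordinal := B + 1 with hγ
  set β : Ordinal := γ + Ordinal.omega0 with hβ
  have hBγ : B < γ := by rw [hγ, Ordinal.add_one_eq_succ]; exact Order.lt_succ B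
  have hγβ : γ < β := by
    rw [hβ]
    exact lt_of_eq_of_lt (add_zero γ).symm ((add_lt_add_iff_left γ).2 Ordinal.omega0_pos)
  have hBβ : B < β := hBγ.trans hγβ
  have hβlim : Order.IsSuccLimit β := Ordinal.isSuccLimit_add γ Ordinal.isSuccLimit_omega0
  have hγord : γ < (Cardinal.aleph 2).ord := by
    rw [Cardinal.lt_ord, hγ, Ordinal.card_add, Ordinal.card_one]
    exact Cardinal.add_lt_of_lt (Cardinal.aleph0_le_aleph 2) (Cardinal.lt_ord.mp hBlt)
      (Cardinal.one_lt_aleph0.trans_le (Cardinal.aleph0_le_aleph 2))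
  have hβord : β < (Cardinal.aleph 2).ord := by
    rw [Cardinal.lt_ord, hβ, Ordinal.card_add, Ordinal.card_omega0]
    refine Cardinal.add_lt_of_lt (Cardinal.aleph0_le_aleph 2) (Cardinal.lt_ord.mp hγord) ?_
    rw [← Cardinal.aleph_zero]
    exact Cardinal.aleph_lt_aleph.2 (by norm_num)
  have hcofβ : β.cof = Cardinal.aleph0 := by
    rw [hβ, Ordinal.cof_add γ Ordinal.omega0_ne_zero, Ordinal.cof_omega0]
  have hcofne : β.cof ≠ Cardinal.aleph 1 := by
    rw [hcofβ, ← Cardinal.aleph_zero]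
    exact (Cardinal.aleph_lt_aleph.2 (by norm_num)).ne
  -- the new working-part value
  set sN : Set Ordinal := Set.Ico γ β with hsN
  have hclub : IsClubIn sN β := by
    refine ⟨fun b hb => hb.2, ?_, ?_⟩
    · intro b hb
      rcases lt_or_ge b γ with h | h
      · exact ⟨γ, ⟨le_refl γ, hγβ⟩, h⟩
      · refine ⟨b + 1, ⟨h.trans (le_of_lt ?_), ?_⟩, ?_⟩
        · rw [Ordinal.add_one_eq_succ]; exact Order.lt_succ b
        · rw [Ordinal.add_one_eq_succ]; exact hβlim.succ_lt hb
        · rw [Ordinal.add_one_eq_succ]; exact Order.lt_succ b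
    · intro b hb hb0 hsup
      rcases le_or_gt b γ with h | h
      · exfalso
        have hempty : sN ∩ Set.Iio b = ∅ := by
          ext x
          simp only [Set.mem_inter_iff, Set.mem_Iio, Set.mem_empty_iff_false, iff_false,
            not_and]
          intro hx hxb
          exact absurd hx.1 (not_le.mpr (hxb.trans_le h))
        rw [hempty, csSup_empty, Ordinal.bot_eq_zero] at hsup
        exact absurd hsup (ne_of_gt hb0)
      · exact ⟨le_of_lt h, hb⟩
  have hsNcnt : sN.Countable := by
    have hsub : sN ⊆ Set.range (fun n : ℕ => γ + (n : Ordinal)) := by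
      intro b hb
      have hle : γ ≤ b := hb.1
      have hlt : b - γ < Ordinal.omega0 := (Ordinal.sub_lt_of_le hle).2 hb.2
      obtain ⟨n, hn⟩ := Ordinal.lt_omega0.mp hlt
      exact ⟨n, by show γ + (n : Ordinal) = b; rw [← hn]; exact Ordinal.add_sub_cancel_of_le hle⟩
    exact (Set.countable_range _).mono hsub
  have hotp : otp sN ≤ (Cardinal.aleph 1).ord := by
    haveI := hsNcnt.to_subtype
    refine le_of_lt (Cardinal.lt_ord.mpr ?_)
    rw [otp, Ordinal.card_type]
    exact lt_of_le_of_lt Cardinal.mk_le_aleph0 Cardinal.aleph0_lt_aleph_one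
  -- limit points of `sN` lie above `γ`
  have hLPnew : ∀ μ, IsLimitPt sN μ → γ < μ := by
    rintro μ ⟨h0, hsup⟩
    by_contra h
    push_neg at h
    have hempty : sN ∩ Set.Iio μ = ∅ := by
      ext x
      simp only [Set.mem_inter_iff, Set.mem_Iio, Set.mem_empty_iff_false, iff_false, not_and]
      intro hx hxμ
      exact absurd hx.1 (not_le.mpr (hxμ.trans_le h))
    rw [hempty, csSup_empty, Ordinal.bot_eq_zero] at hsup
    exact absurd hsup (ne_of_gt h0)
  -- everything appearing in old clubs/limit points is `≤ B`
  have hpFnone : ∀ α, B < α → p.F α = none := by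
    intro α hα
    by_contra h
    exact absurd (hdomB α h) (not_le.mpr hα)
  have hpFβ : p.F β = none := hpFnone β hBβ
  have holdB : ∀ α t, p.F α = some t → ∀ x ∈ t, x ≤ B := by
    intro α t ht x hx
    have hxα : x < α := (h1b α t ht).2.2.1.1 x hx
    have hαdom : α ∈ p.dom := by
      show p.F α ≠ none
      rw [ht]; exact Option.some_ne_none t
    exact le_of_lt (hxα.trans_le (hdomB α hαdom))
  have holdLP : ∀ α t, p.F α = some t → ∀ μ, IsLimitPt t μ → μ ≤ B := by
    rintro α t ht μ ⟨h0, hsup⟩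
    rw [hsup]
    exact csSup_le' (fun x hx => holdB α t ht x hx.1)
  -- trace bounds
  have htrace : ∀ ℳ ∈ p.Mods, ∀ x ∈ ordTrace (ℳ : Set Hω₂), x ≤ B := by
    intro M hM x hx
    obtain ⟨hM0, hS⟩ := h3b M hM
    have hbdd : BddAbove (ordTrace (M : Set Hω₂)) :=
      bddAbove_of_countable (ordTrace_countable hM0.1)
    exact (le_csSup hbdd hx).trans (hdomB _ (h2a hS))
  have hsupTrace : ∀ ℳ ∈ p.Mods, sSup (ordTrace (ℳ : Set Hω₂)) ≤ B := by
    intro M hM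
    exact hdomB _ (h2a (h3b M hM).2)
  -- the two extensions
  set q : SqCond := ⟨fun α => if α = β then some sN else p.F α, p.S, p.O, p.Mods⟩ with hq
  set r : SqCond := ⟨p.F, p.S, insert (γ, β) p.O, p.Mods⟩ with hr
  have hqF : ∀ α t, q.F α = some t → (α = β ∧ t = sN) ∨ (α ≠ β ∧ p.F α = some t) := by
    intro α t ht
    by_cases hαβ : α = β
    · left
      refine ⟨hαβ, ?_⟩
      rw [hq] at ht
      simp only [hαβ, if_pos rfl] at ht
      exact (Option.some_injective _ ht).symm
    · right
      refine ⟨hαβ, ?_⟩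
      rw [hq] at ht
      simpa only [if_neg hαβ] using ht
  have hqFβ : q.F β = some sN := by rw [hq]; simp
  have hconv1 : ∀ α t, p.F α = some t → q.F α = some t := by
    intro α t ht
    have hne : α ≠ β := by
      intro h
      rw [h, hpFβ] at ht
      exact nomatch ht
    rw [hq]
    simpa only [if_neg hne] using ht
  have hdomsup : p.dom ⊆ q.dom := by
    intro α hα
    obtain ⟨s, hs⟩ := Option.ne_none_iff_exists'.mp hα
    show q.F α ≠ none
    rw [hconv1 α s hs]
    exact Option.some_ne_none s
  have hdomsub : q.dom ⊆ insert β p.dom := by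
    intro α hα
    by_cases hαβ : α = β
    · exact Or.inl hαβ
    · right
      have h' : (if α = β then some sN else p.F α) ≠ none := hα
      rw [if_neg hαβ] at h'
      exact h'
  have hβqdom : β ∈ q.dom := by
    show q.F β ≠ none
    rw [hqFβ]
    exact Option.some_ne_none sN
  -- validity of `q`
  have hqvalid : SqValid E q := by
    refine ⟨?_, ?_, ?_, ?_, h3a, ?_, ?_, ?_, ?_, h7a, ?_, h8, h9⟩
    · exact (h1a.insert β).subset hdomsub
    · intro α s hs
      rcases hqF α s hs with ⟨rfl, rfl⟩ | ⟨hne, hps⟩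
      · exact ⟨⟨by rw [← Ordinal.bot_eq_zero]; exact hβlim.ne_bot, fun a ha => hβlim.succ_lt ha⟩, hβord, hclub, hotp, fun hc => absurd hc hcofne⟩
      · obtain ⟨hl, ho, hc, hotp', hcof⟩ := h1b α s hps
        refine ⟨hl, ho, hc, hotp', fun hcf => ?_⟩
        obtain ⟨C, hC, β', hβ', hβ'α, hsC⟩ := hcof hcf
        exact ⟨C, hC, β', hdomsup hβ', hβ'α, hsC⟩
    · exact h2a.trans hdomsup
    · intro α hα hcf
      by_cases hαβ : α = β
      · rw [hαβ] at hcf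
        exact absurd hcf hcofne
      · refine h2b α ?_ hcf
        have h' : (if α = β then some sN else p.F α) ≠ none := hα
        rw [if_neg hαβ] at h'
        exact h'
    · exact h3b
    · -- clause (4)
      intro α α' s t hs ht hne μ hμs hμt
      rcases hqF α s hs with ⟨rfl, rfl⟩ | ⟨hne1, hps⟩ <;>
        rcases hqF α' t ht with ⟨h2', rfl⟩ | ⟨hne2, hpt⟩
      · exact absurd h2'.symm hne
      · exact absurd (holdLP α' t hpt μ hμt) (not_le.mpr ((hLPnew μ hμs).trans_le' hBγ.le))
      · exact absurd (holdLP α s hps μ hμs) (not_le.mpr ((hLPnew μ hμt).trans_le' hBγ.le))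
      · exact h4 α α' s t hps hpt hne μ hμs hμt
    · -- clause (5)
      intro α s hs σ hσ hσα
      rcases hqF α s hs with ⟨rfl, rfl⟩ | ⟨hne, hps⟩
      · refine Set.Finite.subset (Set.finite_empty) ?_
        rintro x ⟨hx1, hx2⟩
        have : x < γ := (hx2.trans_le (hdomB σ (h2a hσ))).trans hBγ
        exact absurd hx1.1 (not_le.mpr this)
      · exact h5 α s hps σ hσ hσα
    · -- clause (6)
      intro α s hs M hM
      intro T
      rcases hqF α s hs with ⟨rfl, rfl⟩ | ⟨hne, hps⟩
      · have hTB : ∀ x ∈ T, x ≤ B := htrace M hM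
        have hTsup : sSup T ≤ B := hsupTrace M hM
        refine ⟨?_, ?_, ?_, ?_⟩
        · intro hβT
          exact absurd (hTB β hβT) (not_le.mpr hBβ)
        · rintro (⟨-, hlt⟩ | ⟨hmem, -⟩)
          · exact absurd (hlt.trans_le hTsup) (not_lt.mpr hBβ.le)
          · exact absurd (hTB β hmem) (not_le.mpr hBβ)
        · rintro ⟨-, -, hlt⟩
          exact absurd (hlt.trans_le hTsup) (not_lt.mpr hBβ.le)
        · rintro ⟨-, heq⟩
          have : sSup (T ∩ Set.Iio β) ≤ B := csSup_le' (fun x hx => hTB x hx.1)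
          rw [heq] at this
          exact absurd this (not_le.mpr hBβ)
      · have H := h6 α s hps M hM
        obtain ⟨H1, H2, H3, H4⟩ := H
        have hαB : α ≤ B := by
          refine hdomB α ?_
          show p.F α ≠ none
          rw [hps]; exact Option.some_ne_none s
        refine ⟨H1, fun h => ⟨(H2 h).1, hdomsup (H2 h).2⟩, ?_, ?_⟩
        · intro h
          rcases H3 h with ⟨β', t, hβ't, hαβ', hlp, hst⟩ | ⟨hall, hfin⟩
          · exact Or.inl ⟨β', t, hconv1 β' t hβ't, hαβ', hlp, hst⟩
          · refine Or.inr ⟨?_, hfin⟩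
            intro β' t hβ't hαβ' hlp
            rcases hqF β' t hβ't with ⟨-, rfl⟩ | ⟨-, hpt⟩
            · exact absurd (hLPnew α hlp) (not_lt.mpr (hαB.trans hBγ.le))
            · exact hall β' t hpt hαβ' hlp
        · intro h
          rcases H4 h with ⟨β', t, hβ't, hαβ', hlp, hst⟩ | ⟨hall, hfin⟩
          · exact Or.inl ⟨β', t, hconv1 β' t hβ't, hαβ', hlp, hst⟩
          · refine Or.inr ⟨?_, hfin⟩
            intro β' t hβ't hαβ' hlp
            rcases hqF β' t hβ't with ⟨-, rfl⟩ | ⟨-, hpt⟩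
            · exact absurd (hLPnew α hlp) (not_lt.mpr (hαB.trans hBγ.le))
            · exact hall β' t hpt hαβ' hlp
    · -- clause (7)
      intro i hi
      refine ⟨(h7b i hi).1, (h7b i hi).2.1, ?_⟩
      have hpd := (h7b i hi).2.2
      ext x
      simp only [Set.mem_inter_iff, Set.mem_empty_iff_false, iff_false, not_and]
      intro hx1 hx2
      rcases hdomsub hx1 with rfl | hxp
      · exact absurd (hx2.2.trans (hOB i hi)) (not_le.mpr hBβ)
      · rw [Set.eq_empty_iff_forall_notMem] at hpd
        exact hpd x ⟨hxp, hx2⟩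
  -- validity of `r`
  have hrvalid : SqValid E r := by
    refine ⟨h1a, h1b, h2a, h2b, h3a, h3b, h4, h5, h6, h7a.insert _, ?_, ?_, h9⟩
    · rintro i (rfl | hi)
      · refine ⟨hγβ, hβord, ?_⟩
        ext x
        simp only [Set.mem_inter_iff, Set.mem_empty_iff_false, iff_false, not_and]
        intro hx1 hx2
        exact absurd hx2.1 (not_lt.mpr ((hdomB x hx1).trans hBγ.le))
      · exact h7b i hi
    · rintro i (rfl | hi) M hM
      · right
        ext x
        simp only [Set.mem_inter_iff, Set.mem_empty_iff_false, iff_false, not_and]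
        intro hx1 hx2
        exact absurd hx2.1 (not_lt.mpr ((htrace M hM x hx1).trans hBγ.le))
      · exact h8 i hi M hM
  refine ⟨q, r, hqvalid, hrvalid, ⟨hconv1, subset_rfl, subset_rfl, subset_rfl⟩,
    ⟨fun α s h => h, subset_rfl, Set.subset_insert _ _, subset_rfl⟩, ?_⟩
  rintro ⟨t, ht, ⟨htF, -, -, -⟩, ⟨-, -, htO, -⟩⟩
  obtain ⟨-, -, -, -, -, -, -, -, -, -, ht7, -, -⟩ := ht
  have h1 : t.F β = some sN := htF β sN hqFβ
  have h2 : (γ, β) ∈ t.O := htO (Set.mem_insert _ _)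
  have h3 := (ht7 (γ, β) h2).2.2
  rw [Set.eq_empty_iff_forall_notMem] at h3
  refine h3 β ⟨?_, hγβ, le_refl β⟩
  show t.F β ≠ none
  rw [h1]
  exact Option.some_ne_none sN

end
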